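/- Let λ ≥ 1 and K = λ. Define 𝒜 = {A ∈ Sym(2) : ‖A‖ ≤ 1 and |tr(A)| ≤ ((λ−1)/(λ+1))(1 + det A)}, and let A₀ = diag(1, −1). Then 𝒜 ⊆ A₀·ℰ ∩ {M : ‖M‖ ≤ 1}, where ℰ = {X ∈ ℝ²ˣ² : ‖R − X‖² ≤ K det(R − X) for all R ∈ SO(2)} is the K-quasiconformal envelope of SO(2). -/

import Mathlib

open Matrix

/-- Operator (ℓ²→ℓ²) norm of a real 2×2 matrix. -/
noncomputable def opNorm (A : Matrix (Fin 2) (Fin 2) ℝ) : ℝ :=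
  ‖Matrix.toEuclideanCLM (𝕜 := ℝ) A‖

/-- The rotation group SO(2) as a set of 2×2 real matrices. -/
def SO2 : Set (Matrix (Fin 2) (Fin 2) ℝ) := {R | R * Rᵀ = 1 ∧ R.det = 1}

/-- The reflection `A₀ = diag(1, -1)`. -/
def A₀ : Matrix (Fin 2) (Fin 2) ℝ := !![1, 0; 0, -1]

set_option maxHeartbeats 2000000

lemma normsq_withLp (w : Fin 2 → ℝ) :
    ‖(WithLp.equiv 2 (Fin 2 → ℝ)).symm w‖ ^ 2 = w 0 ^ 2 + w 1 ^ 2 := by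
  rw [EuclideanSpace.norm_eq, Real.sq_sqrt (by positivity)]
  simp [Fin.sum_univ_two, sq_abs]

lemma apply_eq (M : Matrix (Fin 2) (Fin 2) ℝ) (x y : ℝ) :
    (Matrix.toEuclideanCLM (𝕜 := ℝ) M) ((WithLp.equiv 2 (Fin 2 → ℝ)).symm ![x, y]) =
      (WithLp.equiv 2 (Fin 2 → ℝ)).symm ![M 0 0 * x + M 0 1 * y, M 1 0 * x + M 1 1 * y] := by
  rw [WithLp.equiv_symm_apply, Matrix.toEuclideanCLM_toLp]
  congr 1
  funext i
  fin_cases i <;> simp [Matrix.toLin'_apply, Matrix.mulVec, dotProduct, Fin.sum_univ_two]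

lemma opNorm_le_iff' (M : Matrix (Fin 2) (Fin 2) ℝ) (C : ℝ) (hC : 0 ≤ C)
    (h : ∀ x y : ℝ, (M 0 0 * x + M 0 1 * y) ^ 2 + (M 1 0 * x + M 1 1 * y) ^ 2
      ≤ C ^ 2 * (x ^ 2 + y ^ 2)) : opNorm M ≤ C := by
  apply ContinuousLinearMap.opNorm_le_bound _ hC
  intro v
  have hv : v = (WithLp.equiv 2 (Fin 2 → ℝ)).symm ![v 0, v 1] := by
    apply (WithLp.equiv 2 (Fin 2 → ℝ)).injective
    funext i; fin_cases i <;> rfl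
  rw [hv, apply_eq]
  have h1 := normsq_withLp ![M 0 0 * v 0 + M 0 1 * v 1, M 1 0 * v 0 + M 1 1 * v 1]
  have h2 := normsq_withLp ![v 0, v 1]
  simp only [Matrix.cons_val_zero, Matrix.cons_val_one, Matrix.head_cons] at h1 h2
  have key := h (v 0) (v 1)
  have hn1 : (0:ℝ) ≤ ‖(WithLp.equiv 2 (Fin 2 → ℝ)).symm ![M 0 0 * v 0 + M 0 1 * v 1, M 1 0 * v 0 + M 1 1 * v 1]‖ := norm_nonneg _
  have hn2 : (0:ℝ) ≤ ‖(WithLp.equiv 2 (Fin 2 → ℝ)).symm ![v 0, v 1]‖ := norm_nonneg _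
  nlinarith [mul_nonneg hC hn2]

lemma coord_bound_of_opNorm_le (M : Matrix (Fin 2) (Fin 2) ℝ) (C : ℝ) (h : opNorm M ≤ C)
    (x y : ℝ) : (M 0 0 * x + M 0 1 * y) ^ 2 + (M 1 0 * x + M 1 1 * y) ^ 2
      ≤ C ^ 2 * (x ^ 2 + y ^ 2) := by
  have hC : 0 ≤ C := le_trans (norm_nonneg _) h
  have hb := (Matrix.toEuclideanCLM (𝕜 := ℝ) M).le_opNorm
      ((WithLp.equiv 2 (Fin 2 → ℝ)).symm ![x, y])
  rw [apply_eq] at hb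
  have h1 := normsq_withLp ![M 0 0 * x + M 0 1 * y, M 1 0 * x + M 1 1 * y]
  have h2 := normsq_withLp ![x, y]
  simp only [Matrix.cons_val_zero, Matrix.cons_val_one, Matrix.head_cons] at h1 h2
  have hn2 : (0:ℝ) ≤ ‖(WithLp.equiv 2 (Fin 2 → ℝ)).symm ![x, y]‖ := norm_nonneg _
  have hle : ‖(WithLp.equiv 2 (Fin 2 → ℝ)).symm ![M 0 0 * x + M 0 1 * y, M 1 0 * x + M 1 1 * y]‖
      ≤ C * ‖(WithLp.equiv 2 (Fin 2 → ℝ)).symm ![x, y]‖ :=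
    le_trans hb (by gcongr; exact h)
  nlinarith [norm_nonneg ((WithLp.equiv 2 (Fin 2 → ℝ)).symm ![M 0 0 * x + M 0 1 * y, M 1 0 * x + M 1 1 * y]), mul_nonneg hC hn2]

lemma psd_quad (al be ga : ℝ) (hs : 0 ≤ al + ga) (hd : be^2 ≤ al*ga) (x y : ℝ) :
    0 ≤ al*x^2 + 2*be*x*y + ga*y^2 := by
  have hal : 0 ≤ al := by nlinarith [sq_nonneg be]
  have hga : 0 ≤ ga := by nlinarith [sq_nonneg be]
  rcases eq_or_lt_of_le hal with h | h
  · have hbe : be = 0 := by nlinarith [sq_nonneg be]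
    rw [hbe, ← h]
    nlinarith [sq_nonneg y, hga]
  · nlinarith [sq_nonneg (al*x + be*y), mul_nonneg (sub_nonneg.2 hd) (sq_nonneg y)]

lemma quad_det (al be ga : ℝ) (h : ∀ x y : ℝ, 0 ≤ al*x^2 + 2*be*x*y + ga*y^2) :
    be^2 ≤ al*ga := by
  have hal : 0 ≤ al := by have := h 1 0; nlinarith [this]
  rcases eq_or_lt_of_le hal with h0 | h0
  · by_cases hbe : be = 0
    · have hga : 0 ≤ ga := by have := h 0 1; nlinarith [this]
      rw [hbe, ← h0]; nlinarith [hga]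
    · exfalso
      have hx := h (-(ga+1)/(2*be)) 1
      rw [← h0] at hx
      have h2 : 2*be*(-(ga+1)/(2*be)) = -(ga+1) := by field_simp
      nlinarith [hx, h2]
  · have key := h (-be) al
    nlinarith [key, h0]

lemma scalar_core (lam p q r a b : ℝ) (hlam : 1 ≤ lam)
    (hab : a^2 + b^2 = 1)
    (e1 : p^2 + q^2 ≤ 1) (e2 : q^2 + r^2 ≤ 1)
    (e3 : q^2*(p+r)^2 ≤ (1 - p^2 - q^2)*(1 - q^2 - r^2))
    (htr : |p + r| ≤ (lam-1)/(lam+1) * (1 + (p*r - q^2))) :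
    0 ≤ (a-p)*(a+r) + (b-q)^2 ∧
    lam*(p+r)^2 ≤ (lam-1)^2 * ((a-p)*(a+r) + (b-q)^2) ∧
    (p+r)^2 ≤ 2*(lam-1)*((a-p)*(a+r) + (b-q)^2) := by
  obtain ⟨c, hc⟩ : ∃ c : ℝ, c = 1 - p*r + q^2 := ⟨_, rfl⟩
  obtain ⟨g, hg⟩ : ∃ g : ℝ, g = a*(p-r) + 2*b*q := ⟨_, rfl⟩
  have hDg : (a-p)*(a+r) + (b-q)^2 = c - g := by
    rw [hc, hg]; linear_combination hab
  have hc0 : 0 ≤ c := by rw [hc]; nlinarith [sq_nonneg (p-r)]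
  have hW2 : (0:ℝ) ≤ (p-r)^2 + 4*q^2 := by positivity
  obtain ⟨w, hw0, hwsq⟩ : ∃ w : ℝ, 0 ≤ w ∧ w^2 = (p-r)^2 + 4*q^2 :=
    ⟨Real.sqrt _, Real.sqrt_nonneg _, Real.sq_sqrt hW2⟩
  have hwc : w ≤ c := by
    have hident : c^2 - ((p-r)^2 + 4*q^2)
        = (1 - p^2 - q^2)*(1 - q^2 - r^2) - q^2*(p+r)^2 := by rw [hc]; ring
    have hsq : w^2 ≤ c^2 := by rw [hwsq]; linarith [e3, hident]
    exact le_of_pow_le_pow_left₀ two_ne_zero hc0 hsq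
  have hgw : g ≤ w := by
    have key : w^2 - g^2 = (b*(p-r) - 2*a*q)^2 := by
      rw [hg, hwsq]; linear_combination (-((p-r)^2 + 4*q^2)) * hab
    have h1 : g^2 ≤ w^2 := by linarith [key, sq_nonneg (b*(p-r) - 2*a*q)]
    calc g ≤ |g| := le_abs_self g
      _ ≤ w := by
          apply le_of_pow_le_pow_left₀ two_ne_zero hw0
          rw [sq_abs]; exact h1
  have hD0 : 0 ≤ (a-p)*(a+r) + (b-q)^2 := by rw [hDg]; linarith
  have hlam1 : (0:ℝ) < lam + 1 := by linarith
  have htr2 : (lam+1)*|p+r| ≤ (lam-1)*(2 - c) := by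
    have h := mul_le_mul_of_nonneg_left htr (le_of_lt hlam1)
    have hcan : (lam+1) * ((lam-1)/(lam+1)) = lam - 1 :=
      mul_div_cancel₀ _ (ne_of_gt hlam1)
    have h2 : (lam+1) * ((lam-1)/(lam+1) * (1 + (p*r - q^2))) = (lam-1)*(2-c) := by
      rw [← mul_assoc, hcan, hc]; ring
    linarith [h2 ▸ h]
  have htr3 : (lam+1)*|p+r| ≤ (lam-1)*(2 - w) := by
    have : (lam-1)*(2-c) ≤ (lam-1)*(2-w) :=
      mul_le_mul_of_nonneg_left (by linarith) (by linarith)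
    linarith
  have h1 : (lam+1)^2*(p+r)^2 ≤ (lam-1)^2*(2-w)^2 := by
    have ha1 : 0 ≤ (lam+1)*|p+r| := by positivity
    have h := mul_self_le_mul_self ha1 htr3
    calc (lam+1)^2*(p+r)^2 = ((lam+1)*|p+r|)*((lam+1)*|p+r|) := by
          rw [← sq_abs (p+r)]; ring
      _ ≤ ((lam-1)*(2-w))*((lam-1)*(2-w)) := h
      _ = (lam-1)^2*(2-w)^2 := by ring
  have h4c : (lam-1)^2 * (4*c) = (lam-1)^2 * (4 - (p+r)^2 + w^2) := by
    rw [hc, hwsq]; ring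
  have hcw : lam*(p+r)^2 ≤ (lam-1)^2*(c - w) := by linarith [h1, h4c]
  have hgw2 : (lam-1)^2*g ≤ (lam-1)^2*w :=
    mul_le_mul_of_nonneg_left hgw (sq_nonneg _)
  have hmain : lam*(p+r)^2 ≤ (lam-1)^2 * ((a-p)*(a+r) + (b-q)^2) := by
    rw [hDg]; linarith [hcw, hgw2]
  refine ⟨hD0, hmain, ?_⟩
  nlinarith [hmain, hD0, mul_nonneg (sub_nonneg.2 hlam) hD0, sq_nonneg (p+r)]

theorem stmt4 (lam : ℝ) (hlam : 1 ≤ lam) :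
    {A : Matrix (Fin 2) (Fin 2) ℝ | Aᵀ = A ∧ opNorm A ≤ 1 ∧
        |A.trace| ≤ (lam - 1) / (lam + 1) * (1 + A.det)} ⊆
      ((fun X => A₀ * X) ''
          {X : Matrix (Fin 2) (Fin 2) ℝ |
            ∀ R ∈ SO2, opNorm (R - X) ^ 2 ≤ lam * (R - X).det}) ∩
        {M | opNorm M ≤ 1} := by
  intro A hA
  obtain ⟨hsymm, hnorm, htrace⟩ := hA
  have hq : A 1 0 = A 0 1 := by
    have := congrFun (congrFun hsymm 0) 1
    simpa [Matrix.transpose_apply] using this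
  have hcoord := coord_bound_of_opNorm_le A 1 hnorm
  have e1 : (A 0 0)^2 + (A 0 1)^2 ≤ 1 := by
    have := hcoord 1 0; rw [hq] at this; linarith [this]
  have e2 : (A 0 1)^2 + (A 1 1)^2 ≤ 1 := by
    have := hcoord 0 1; rw [hq] at this; linarith [this]
  have e3 : (A 0 1)^2*(A 0 0 + A 1 1)^2 ≤
      (1 - (A 0 0)^2 - (A 0 1)^2)*(1 - (A 0 1)^2 - (A 1 1)^2) := by
    have hqd := quad_det (1 - (A 0 0)^2 - (A 0 1)^2) (-(A 0 1)*(A 0 0 + A 1 1))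
        (1 - (A 0 1)^2 - (A 1 1)^2) ?_
    · nlinarith [hqd]
    · intro x y
      have := hcoord x y; rw [hq] at this; linarith [this]
  have htr' : |A 0 0 + A 1 1| ≤ (lam-1)/(lam+1) * (1 + (A 0 0 * A 1 1 - (A 0 1)^2)) := by
    have e : (lam-1)/(lam+1) * (1 + A.det)
        = (lam-1)/(lam+1) * (1 + (A 0 0 * A 1 1 - (A 0 1)^2)) := by
      rw [Matrix.det_fin_two, hq]; ring
    rw [Matrix.trace_fin_two, e] at htrace
    exact htrace
  have hA₀ : A₀ * A₀ = 1 := by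
    ext i j
    fin_cases i <;> fin_cases j <;>
      simp [A₀, Matrix.mul_apply, Fin.sum_univ_two, Matrix.one_apply]
  constructor
  · refine ⟨A₀ * A, ?_, ?_⟩
    · intro R hR
      obtain ⟨hRO, hRdet⟩ := hR
      have h00 : R 0 0 * R 0 0 + R 0 1 * R 0 1 = 1 := by
        have := congrFun (congrFun hRO 0) 0
        simpa [Matrix.mul_apply, Fin.sum_univ_two, Matrix.one_apply] using this
      have h01 : R 0 0 * R 1 0 + R 0 1 * R 1 1 = 0 := by
        have := congrFun (congrFun hRO 0) 1
        simpa [Matrix.mul_apply, Fin.sum_univ_two, Matrix.one_apply] using this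
      have h11 : R 1 0 * R 1 0 + R 1 1 * R 1 1 = 1 := by
        have := congrFun (congrFun hRO 1) 1
        simpa [Matrix.mul_apply, Fin.sum_univ_two, Matrix.one_apply] using this
      have hd : R 0 0 * R 1 1 - R 0 1 * R 1 0 = 1 := by
        rw [Matrix.det_fin_two] at hRdet; exact hRdet
      have hR10 : R 1 0 = -R 0 1 := by
        linear_combination R 1 1 * h01 - R 1 0 * hd - R 0 1 * h11
      have hR11 : R 1 1 = R 0 0 := by
        linear_combination R 0 0 * hd + R 0 1 * h01 - R 1 1 * h00
      have hab : (R 0 0)^2 + (R 0 1)^2 = 1 := by linear_combination h00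
      obtain ⟨hD0, hmain, htrc⟩ := scalar_core lam (A 0 0) (A 0 1) (A 1 1)
        (R 0 0) (R 0 1) hlam hab e1 e2 e3 htr'
      have hA00 : A₀ 0 0 = 1 := rfl
      have hA01 : A₀ 0 1 = 0 := rfl
      have hA10 : A₀ 1 0 = 0 := rfl
      have hA11 : A₀ 1 1 = -1 := rfl
      have hM00 : (R - A₀ * A) 0 0 = R 0 0 - A 0 0 := by
        rw [Matrix.sub_apply, Matrix.mul_apply, Fin.sum_univ_two, hA00, hA01]; ring
      have hM01 : (R - A₀ * A) 0 1 = R 0 1 - A 0 1 := by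
        rw [Matrix.sub_apply, Matrix.mul_apply, Fin.sum_univ_two, hA00, hA01]; ring
      have hM10 : (R - A₀ * A) 1 0 = A 0 1 - R 0 1 := by
        rw [Matrix.sub_apply, Matrix.mul_apply, Fin.sum_univ_two, hA10, hA11, hR10, hq]; ring
      have hM11 : (R - A₀ * A) 1 1 = R 0 0 + A 1 1 := by
        rw [Matrix.sub_apply, Matrix.mul_apply, Fin.sum_univ_two, hA10, hA11, hR11]; ring
      have hdet : (R - A₀ * A).det
          = (R 0 0 - A 0 0)*(R 0 0 + A 1 1) + (R 0 1 - A 0 1)^2 := by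
        rw [Matrix.det_fin_two, hM00, hM01, hM10, hM11]; ring
      have hlD0 : 0 ≤ lam * ((R 0 0 - A 0 0)*(R 0 0 + A 1 1) + (R 0 1 - A 0 1)^2) :=
        mul_nonneg (by linarith) hD0
      have hON : opNorm (R - A₀ * A) ≤
          Real.sqrt (lam * ((R 0 0 - A 0 0)*(R 0 0 + A 1 1) + (R 0 1 - A 0 1)^2)) := by
        apply opNorm_le_iff' _ _ (Real.sqrt_nonneg _)
        intro x y
        rw [hM00, hM01, hM10, hM11, Real.sq_sqrt hlD0]
        have hsum : 0 ≤ (lam * ((R 0 0 - A 0 0)*(R 0 0 + A 1 1) + (R 0 1 - A 0 1)^2)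
              - ((R 0 0 - A 0 0)^2 + (A 0 1 - R 0 1)^2))
            + (lam * ((R 0 0 - A 0 0)*(R 0 0 + A 1 1) + (R 0 1 - A 0 1)^2)
              - ((R 0 1 - A 0 1)^2 + (R 0 0 + A 1 1)^2)) := by
          have keq : (lam * ((R 0 0 - A 0 0)*(R 0 0 + A 1 1) + (R 0 1 - A 0 1)^2)
              - ((R 0 0 - A 0 0)^2 + (A 0 1 - R 0 1)^2))
            + (lam * ((R 0 0 - A 0 0)*(R 0 0 + A 1 1) + (R 0 1 - A 0 1)^2)
              - ((R 0 1 - A 0 1)^2 + (R 0 0 + A 1 1)^2))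
            = 2*(lam-1)*((R 0 0 - A 0 0)*(R 0 0 + A 1 1) + (R 0 1 - A 0 1)^2)
              - (A 0 0 + A 1 1)^2 := by ring
          rw [keq]
          linarith [htrc]
        have hdet2 : (-(((R 0 0 - A 0 0))*(R 0 1 - A 0 1) + (A 0 1 - R 0 1)*(R 0 0 + A 1 1)))^2
            ≤ (lam * ((R 0 0 - A 0 0)*(R 0 0 + A 1 1) + (R 0 1 - A 0 1)^2)
              - ((R 0 0 - A 0 0)^2 + (A 0 1 - R 0 1)^2))
            * (lam * ((R 0 0 - A 0 0)*(R 0 0 + A 1 1) + (R 0 1 - A 0 1)^2)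
              - ((R 0 1 - A 0 1)^2 + (R 0 0 + A 1 1)^2)) := by
          have keq : (lam * ((R 0 0 - A 0 0)*(R 0 0 + A 1 1) + (R 0 1 - A 0 1)^2)
              - ((R 0 0 - A 0 0)^2 + (A 0 1 - R 0 1)^2))
            * (lam * ((R 0 0 - A 0 0)*(R 0 0 + A 1 1) + (R 0 1 - A 0 1)^2)
              - ((R 0 1 - A 0 1)^2 + (R 0 0 + A 1 1)^2))
            - (-(((R 0 0 - A 0 0))*(R 0 1 - A 0 1) + (A 0 1 - R 0 1)*(R 0 0 + A 1 1)))^2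
            = ((R 0 0 - A 0 0)*(R 0 0 + A 1 1) + (R 0 1 - A 0 1)^2)
              * ((lam-1)^2 * ((R 0 0 - A 0 0)*(R 0 0 + A 1 1) + (R 0 1 - A 0 1)^2)
                - lam*(A 0 0 + A 1 1)^2) := by ring
          linarith [mul_nonneg hD0 (sub_nonneg.2 hmain), keq.ge, keq.le]
        have hq2 := psd_quad _ _ _ hsum hdet2 x y
        have hid : lam * ((R 0 0 - A 0 0)*(R 0 0 + A 1 1) + (R 0 1 - A 0 1)^2) * (x^2 + y^2)
            - (((R 0 0 - A 0 0) * x + (R 0 1 - A 0 1) * y) ^ 2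
              + ((A 0 1 - R 0 1) * x + (R 0 0 + A 1 1) * y) ^ 2)
            = (lam * ((R 0 0 - A 0 0)*(R 0 0 + A 1 1) + (R 0 1 - A 0 1)^2)
              - ((R 0 0 - A 0 0)^2 + (A 0 1 - R 0 1)^2)) * x^2
            + 2*(-(((R 0 0 - A 0 0))*(R 0 1 - A 0 1) + (A 0 1 - R 0 1)*(R 0 0 + A 1 1)))*x*y
            + (lam * ((R 0 0 - A 0 0)*(R 0 0 + A 1 1) + (R 0 1 - A 0 1)^2)
              - ((R 0 1 - A 0 1)^2 + (R 0 0 + A 1 1)^2)) * y^2 := by ring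
        linarith [hq2, hid]
      have hsq : opNorm (R - A₀ * A) ^ 2 ≤
          lam * ((R 0 0 - A 0 0)*(R 0 0 + A 1 1) + (R 0 1 - A 0 1)^2) := by
        have hnn : 0 ≤ opNorm (R - A₀ * A) := norm_nonneg _
        calc opNorm (R - A₀ * A) ^ 2
            = opNorm (R - A₀ * A) * opNorm (R - A₀ * A) := sq (opNorm (R - A₀ * A)) ▸ by ring
          _ ≤ Real.sqrt (lam * ((R 0 0 - A 0 0)*(R 0 0 + A 1 1) + (R 0 1 - A 0 1)^2))
              * Real.sqrt (lam * ((R 0 0 - A 0 0)*(R 0 0 + A 1 1) + (R 0 1 - A 0 1)^2)) :=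
            mul_self_le_mul_self hnn hON
          _ = lam * ((R 0 0 - A 0 0)*(R 0 0 + A 1 1) + (R 0 1 - A 0 1)^2) :=
            Real.mul_self_sqrt hlD0
      rw [hdet]
      exact hsq
    · show A₀ * (A₀ * A) = A
      rw [← Matrix.mul_assoc, hA₀, Matrix.one_mul]
  · exact hnorm
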